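/- Let ℓ ≥ 2 and let (n_k)_{k∈ℕ} be an increasing sequence of natural numbers such that for all finite nonempty sets α, β, γ ⊆ ℕ, Σ_{j∈α} n_j + Σ_{j∈β} n_j = Σ_{j∈γ} n_j holds if and only if α ∪ β = γ and α ∩ β = ∅. Then the finite sums set FS((n_k)_{k∈ℕ}) does not contain D₂((c_k)_{k=1}^{14}) for any 14-element sequence (c_k)_{k=1}^{14} of integers with D₂((c_k)_{k=1}^{14}) ⊆ ℕ. In particular FS((n_k)) is not a Δ_{2,14} set. -/

import Mathlib

/-- If `(n_k)` is strictly increasing and satisfies the sum-injectivity condition, then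
`FS((n_k))` does not contain `D₂((c_k)_{k=1}^{14})` for any 14-element integer sequence
whose second differences are all positive; i.e. `FS((n_k))` is not a `Δ_{2,14}` set. -/
theorem FS_not_Delta_two_fourteen (n : ℕ → ℕ) (hmono : StrictMono n) (hpos : ∀ k, 0 < n k)
    (hinj : ∀ α β γ : Finset ℕ, α.Nonempty → β.Nonempty → γ.Nonempty →
      ((∑ j ∈ α, n j) + (∑ j ∈ β, n j) = ∑ j ∈ γ, n j ↔ α ∪ β = γ ∧ Disjoint α β)) :
    ¬ ∃ c : Fin 14 → ℤ,
      (∀ k₁ k₂ k₃ k₄ : Fin 14, k₁ < k₂ → k₂ < k₃ → k₃ < k₄ →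
        0 < (c k₄ - c k₃) - (c k₂ - c k₁)) ∧
      (∀ k₁ k₂ k₃ k₄ : Fin 14, k₁ < k₂ → k₂ < k₃ → k₃ < k₄ →
        ∃ F : Finset ℕ, F.Nonempty ∧
          (∑ j ∈ F, (n j : ℤ)) = (c k₄ - c k₃) - (c k₂ - c k₁)) := by
  rintro ⟨c, -, h2⟩
  -- extract the support sets for the relevant quadruples
  obtain ⟨A, hA, hAs⟩ := h2 2 3 4 5 (by decide) (by decide) (by decide)
  obtain ⟨B, hB, hBs⟩ := h2 0 1 2 4 (by decide) (by decide) (by decide)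
  obtain ⟨C, hC, hCs⟩ := h2 0 1 3 5 (by decide) (by decide) (by decide)
  obtain ⟨D, hD, hDs⟩ := h2 1 2 5 6 (by decide) (by decide) (by decide)
  obtain ⟨E, hE, hEs⟩ := h2 1 3 4 6 (by decide) (by decide) (by decide)
  obtain ⟨G, hG, hGs⟩ := h2 3 5 6 7 (by decide) (by decide) (by decide)
  obtain ⟨H, hH, hHs⟩ := h2 1 4 5 7 (by decide) (by decide) (by decide)
  obtain ⟨K, hK, hKs⟩ := h2 0 3 4 7 (by decide) (by decide) (by decide)
  -- turn an integer sum identity into a natural one and apply `hinj`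
  have key : ∀ X Y Z : Finset ℕ, X.Nonempty → Y.Nonempty → Z.Nonempty →
      ((∑ j ∈ X, (n j : ℤ)) + (∑ j ∈ Y, (n j : ℤ)) = ∑ j ∈ Z, (n j : ℤ)) →
      X ∪ Y = Z ∧ Disjoint X Y := by
    intro X Y Z hX hY hZ hsum
    have hnat : (∑ j ∈ X, n j) + (∑ j ∈ Y, n j) = ∑ j ∈ Z, n j := by
      exact_mod_cast hsum
    exact (hinj X Y Z hX hY hZ).mp hnat
  -- S(2345) ⊆ S(0135)
  have r1 : A ∪ B = C ∧ Disjoint A B := by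
    apply key A B C hA hB hC
    rw [hAs, hBs, hCs]; ring
  -- S(2345) ⊆ S(1346)
  have r2 : A ∪ D = E ∧ Disjoint A D := by
    apply key A D E hA hD hE
    rw [hAs, hDs, hEs]; ring
  -- S(1346) ⊆ S(1457)
  have r3 : E ∪ G = H ∧ Disjoint E G := by
    apply key E G H hE hG hH
    rw [hEs, hGs, hHs]; ring
  -- S(0135) and S(1457) are disjoint
  have r4 : C ∪ H = K ∧ Disjoint C H := by
    apply key C H K hC hH hK
    rw [hCs, hHs, hKs]; ring
  -- derive the contradiction: A ⊆ C and A ⊆ E ⊆ H, but C ⟂ H and A nonempty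
  have hAC : A ⊆ C := r1.1 ▸ Finset.subset_union_left
  have hAE : A ⊆ E := r2.1 ▸ Finset.subset_union_left
  have hEH : E ⊆ H := r3.1 ▸ Finset.subset_union_left
  have hAH : A ⊆ H := hAE.trans hEH
  obtain ⟨x, hx⟩ := hA
  have : x ∈ (⊥ : Finset ℕ) := r4.2.le_bot (Finset.mem_inter.mpr ⟨hAC hx, hAH hx⟩)
  simp at this
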